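/- Let (Ω, P, π) be a finite irreducible reversible Markov chain with relaxation time t_rel, and let A ⊆ Ω be nonempty. Then for every t ≥ 0, P_π[T_A > t] ≤ (1 - π(A))·exp(-t·π(A)/t_rel), where T_A is the hitting time of A and the chain is started from stationarity π. -/

import Mathlib

open Finset

/-- `survSet P A t x = P_x[T_A > t]`: the probability, starting from `x`, of not
having visited the set `A` by time `t`. -/
noncomputable def survSet {Ω : Type*} [Fintype Ω] [DecidableEq Ω]
    (P : Matrix Ω Ω ℝ) (A : Finset Ω) : ℕ → Ω → ℝ
  | 0, x => if x ∈ A then 0 else 1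
  | (t + 1), x => if x ∈ A then 0 else ∑ y, P x y * survSet P A t y

set_option linter.unusedSectionVars false
set_option linter.unusedVariables false

section AuxST
open RealInnerProductSpace

variable {Ω : Type*} [Fintype Ω] [Nonempty Ω] [DecidableEq Ω]

lemma mulVec_apply' (P : Matrix Ω Ω ℝ) (f : Ω → ℝ) (x : Ω) :
    P.mulVec f x = ∑ y, P x y * f y := by
  simp [Matrix.mulVec, dotProduct]

variable {P : Matrix Ω Ω ℝ} {π : Ω → ℝ}

lemma stationary (hP1 : ∀ x, ∑ y, P x y = 1)
    (hrev : ∀ x y, π x * P x y = π y * P y x) (y : Ω) :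
    ∑ x, π x * P x y = π y := by
  calc ∑ x, π x * P x y = ∑ x, π y * P y x := Finset.sum_congr rfl fun x _ => hrev x y
    _ = π y := by rw [← Finset.mul_sum, hP1, mul_one]

lemma ip_nonneg (hπ0 : ∀ x, 0 < π x) (f : Ω → ℝ) : 0 ≤ ∑ x, π x * f x * f x :=
  Finset.sum_nonneg fun x _ => by
    rw [mul_assoc]; exact mul_nonneg (hπ0 x).le (mul_self_nonneg _)

lemma ip_zero (hπ0 : ∀ x, 0 < π x) {f : Ω → ℝ}
    (h : ∑ x, π x * f x * f x = 0) (x : Ω) : f x = 0 := by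
  have h2 := (Finset.sum_eq_zero_iff_of_nonneg
    (fun x _ => by rw [mul_assoc]; exact mul_nonneg (hπ0 x).le (mul_self_nonneg _) : ∀ x ∈ univ, 0 ≤ π x * f x * f x)).mp h x (mem_univ x)
  by_contra hfx
  have h3 : 0 < π x * f x * f x := by
    rw [mul_assoc]
    exact mul_pos (hπ0 x) (mul_self_pos.mpr hfx)
  linarith

lemma ip_pos (hπ0 : ∀ x, 0 < π x) {f : Ω → ℝ} (hf : f ≠ 0) :
    0 < ∑ x, π x * f x * f x := by
  rcases (ip_nonneg hπ0 f).lt_or_eq with h | h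
  · exact h
  · exact absurd (funext (ip_zero hπ0 h.symm) : f = 0) hf

lemma E_expand (P : Matrix Ω Ω ℝ) (π : Ω → ℝ) (f g : Ω → ℝ) :
    ∑ x, π x * f x * P.mulVec g x = ∑ x, ∑ y, π x * P x y * f x * g y := by
  refine Finset.sum_congr rfl fun x _ => ?_
  rw [mulVec_apply', Finset.mul_sum]
  exact Finset.sum_congr rfl fun y _ => by ring

lemma E_symm (hrev : ∀ x y, π x * P x y = π y * P y x) (f g : Ω → ℝ) :
    ∑ x, π x * f x * P.mulVec g x = ∑ x, π x * g x * P.mulVec f x := by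
  rw [E_expand, E_expand, Finset.sum_comm]
  refine Finset.sum_congr rfl fun a _ => Finset.sum_congr rfl fun b _ => ?_
  rw [hrev b a]; ring

lemma half_sum (hP1 : ∀ x, ∑ y, P x y = 1)
    (hrev : ∀ x y, π x * P x y = π y * P y x) (f : Ω → ℝ) :
    ∑ x, ∑ y, (π x * P x y * (f x * f x) + π x * P x y * (f y * f y)) / 2
      = ∑ x, π x * f x * f x := by
  have hA : ∑ x, ∑ y, π x * P x y * (f x * f x) = ∑ x, π x * f x * f x := by
    refine Finset.sum_congr rfl fun x _ => ?_
    calc ∑ y, π x * P x y * (f x * f x) = (π x * (f x * f x)) * ∑ y, P x y := by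
          rw [Finset.mul_sum]; exact Finset.sum_congr rfl fun y _ => by ring
      _ = π x * f x * f x := by rw [hP1]; ring
  have hB : ∑ x, ∑ y, π x * P x y * (f y * f y) = ∑ x, π x * f x * f x := by
    rw [Finset.sum_comm]
    refine Finset.sum_congr rfl fun y _ => ?_
    calc ∑ x, π x * P x y * (f y * f y) = (∑ x, π x * P x y) * (f y * f y) := by
          rw [Finset.sum_mul]
      _ = π y * f y * f y := by rw [stationary hP1 hrev]; ring
  have : ∑ x, ∑ y, (π x * P x y * (f x * f x) + π x * P x y * (f y * f y)) / 2
      = ((∑ x, ∑ y, π x * P x y * (f x * f x)) + ∑ x, ∑ y, π x * P x y * (f y * f y)) / 2 := by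
    simp only [add_div, Finset.sum_add_distrib, Finset.sum_div]
  rw [this, hA, hB]
  ring

lemma energy_le (hP0 : ∀ x y, 0 ≤ P x y) (hP1 : ∀ x, ∑ y, P x y = 1)
    (hπ0 : ∀ x, 0 < π x) (hrev : ∀ x y, π x * P x y = π y * P y x) (f : Ω → ℝ) :
    ∑ x, π x * f x * P.mulVec f x ≤ ∑ x, π x * f x * f x := by
  rw [E_expand, ← half_sum hP1 hrev f]
  refine Finset.sum_le_sum fun x _ => Finset.sum_le_sum fun y _ => ?_
  have h := mul_nonneg (hπ0 x).le (hP0 x y)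
  nlinarith [sq_nonneg (f x - f y)]

lemma neg_energy_le (hP0 : ∀ x y, 0 ≤ P x y) (hP1 : ∀ x, ∑ y, P x y = 1)
    (hπ0 : ∀ x, 0 < π x) (hrev : ∀ x y, π x * P x y = π y * P y x) (f : Ω → ℝ) :
    -(∑ x, π x * f x * f x) ≤ ∑ x, π x * f x * P.mulVec f x := by
  rw [E_expand, ← half_sum hP1 hrev f]
  have : -(∑ x, ∑ y, (π x * P x y * (f x * f x) + π x * P x y * (f y * f y)) / 2)
      = ∑ x, ∑ y, -((π x * P x y * (f x * f x) + π x * P x y * (f y * f y)) / 2) := by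
    simp [Finset.sum_neg_distrib]
  rw [this]
  refine Finset.sum_le_sum fun x _ => Finset.sum_le_sum fun y _ => ?_
  have h := mul_nonneg (hπ0 x).le (hP0 x y)
  nlinarith [sq_nonneg (f x + f y)]

lemma eig_abs_le_one (hP0 : ∀ x y, 0 ≤ P x y) (hP1 : ∀ x, ∑ y, P x y = 1)
    {r : ℝ} {f : Ω → ℝ} (hf : f ≠ 0) (heig : P.mulVec f = r • f) : |r| ≤ 1 := by
  obtain ⟨x, -, hx⟩ := Finset.exists_max_image univ (fun z => |f z|) univ_nonempty
  have hfx : 0 < |f x| := by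
    obtain ⟨z, hz⟩ := Function.ne_iff.mp hf
    exact lt_of_lt_of_le (abs_pos.mpr hz) (hx z (mem_univ z))
  have h1 : |r| * |f x| ≤ 1 * |f x| := by
    rw [one_mul]
    have h2 : (P.mulVec f) x = r * f x := by rw [heig]; rfl
    calc |r| * |f x| = |r * f x| := (abs_mul r (f x)).symm
      _ = |∑ y, P x y * f y| := by rw [← h2, mulVec_apply']
      _ ≤ ∑ y, |P x y * f y| := Finset.abs_sum_le_sum_abs _ _
      _ = ∑ y, P x y * |f y| := Finset.sum_congr rfl fun y _ => by
            rw [abs_mul, abs_of_nonneg (hP0 x y)]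
      _ ≤ ∑ y, P x y * |f x| := Finset.sum_le_sum fun y _ =>
            mul_le_mul_of_nonneg_left (hx y (mem_univ y)) (hP0 x y)
      _ = |f x| := by rw [← Finset.sum_mul, hP1, one_mul]
  exact le_of_mul_le_mul_right h1 hfx

noncomputable def Smat (P : Matrix Ω Ω ℝ) (π : Ω → ℝ) : Matrix Ω Ω ℝ :=
  Matrix.of fun x y => Real.sqrt (π x) * P x y / Real.sqrt (π y)

noncomputable def spv (π : Ω → ℝ) : EuclideanSpace ℝ Ω :=
  (WithLp.equiv 2 (Ω → ℝ)).symm fun x => Real.sqrt (π x)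

lemma spv_apply (π : Ω → ℝ) (x : Ω) : spv π x = Real.sqrt (π x) := rfl

lemma inner_formula (v w : EuclideanSpace ℝ Ω) : ⟪v, w⟫ = ∑ x, v x * w x := by
  simp [PiLp.inner_apply, RCLike.inner_apply, starRingEnd_apply]
  exact Finset.sum_congr rfl fun x _ => mul_comm _ _

lemma tEL_apply (S : Matrix Ω Ω ℝ) (v : EuclideanSpace ℝ Ω) (x : Ω) :
    (Matrix.toEuclideanLin S v) x = ∑ y, S x y * v y := by
  simp [Matrix.toEuclideanLin_apply, Matrix.mulVec, dotProduct]

lemma Smat_herm (hπ0 : ∀ x, 0 < π x) (hrev : ∀ x y, π x * P x y = π y * P y x) :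
    (Smat P π).IsHermitian := by
  apply Matrix.IsHermitian.ext
  intro x y
  simp only [Smat, Matrix.of_apply, RCLike.star_def, starRingEnd_apply, star_trivial]
  have hy := Real.mul_self_sqrt (hπ0 y).le
  have hx := Real.mul_self_sqrt (hπ0 x).le
  have hxne : Real.sqrt (π x) ≠ 0 := ne_of_gt (Real.sqrt_pos.mpr (hπ0 x))
  have hyne : Real.sqrt (π y) ≠ 0 := ne_of_gt (Real.sqrt_pos.mpr (hπ0 y))
  rw [div_eq_div_iff hxne hyne]
  linear_combination P y x * hy - P x y * hx + hrev y x

lemma conv_inner (hπ0 : ∀ x, 0 < π x) (v : EuclideanSpace ℝ Ω) :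
    ⟪Matrix.toEuclideanLin (Smat P π) v, v⟫
      = ∑ x, π x * (v x / Real.sqrt (π x)) *
          (P.mulVec fun y => v y / Real.sqrt (π y)) x := by
  rw [inner_formula]
  refine Finset.sum_congr rfl fun x _ => ?_
  rw [tEL_apply, mulVec_apply', Finset.sum_mul, Finset.mul_sum]
  refine Finset.sum_congr rfl fun y _ => ?_
  have hxne : Real.sqrt (π x) ≠ 0 := ne_of_gt (Real.sqrt_pos.mpr (hπ0 x))
  have hyne : Real.sqrt (π y) ≠ 0 := ne_of_gt (Real.sqrt_pos.mpr (hπ0 y))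
  have hx : π x = Real.sqrt (π x) * Real.sqrt (π x) := (Real.mul_self_sqrt (hπ0 x).le).symm
  simp only [Smat, Matrix.of_apply]
  rw [hx]
  field_simp
  rw [Real.sqrt_sq (Real.sqrt_nonneg _)]

lemma conv_norm (hπ0 : ∀ x, 0 < π x) (v : EuclideanSpace ℝ Ω) :
    ‖v‖^2 = ∑ x, π x * (v x / Real.sqrt (π x)) * (v x / Real.sqrt (π x)) := by
  rw [← real_inner_self_eq_norm_sq, inner_formula]
  refine Finset.sum_congr rfl fun x _ => ?_
  have hxne : Real.sqrt (π x) ≠ 0 := ne_of_gt (Real.sqrt_pos.mpr (hπ0 x))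
  have hx : π x = Real.sqrt (π x) * Real.sqrt (π x) := (Real.mul_self_sqrt (hπ0 x).le).symm
  rw [hx]
  field_simp
  rw [Real.sqrt_sq (Real.sqrt_nonneg _)]

lemma conv_mean (hπ0 : ∀ x, 0 < π x) (v : EuclideanSpace ℝ Ω) :
    ⟪spv π, v⟫ = ∑ x, π x * (v x / Real.sqrt (π x)) := by
  rw [inner_formula]
  refine Finset.sum_congr rfl fun x _ => ?_
  have hxne : Real.sqrt (π x) ≠ 0 := ne_of_gt (Real.sqrt_pos.mpr (hπ0 x))
  have hx : π x = Real.sqrt (π x) * Real.sqrt (π x) := (Real.mul_self_sqrt (hπ0 x).le).symm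
  rw [spv_apply, hx]
  field_simp
  rw [Real.sqrt_sq (Real.sqrt_nonneg _)]

lemma conv_eig (hπ0 : ∀ x, 0 < π x) {μ : ℝ} {v : EuclideanSpace ℝ Ω}
    (hv : Matrix.toEuclideanLin (Smat P π) v = μ • v) :
    P.mulVec (fun x => v x / Real.sqrt (π x)) = μ • (fun x => v x / Real.sqrt (π x)) := by
  funext x
  have hvx : ∑ y, Smat P π x y * v y = μ * v x := by
    have h1 : (Matrix.toEuclideanLin (Smat P π) v) x = (μ • v) x := congrFun (congrArg WithLp.ofLp hv) x
    rw [tEL_apply] at h1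
    simpa using h1
  have hxne : Real.sqrt (π x) ≠ 0 := ne_of_gt (Real.sqrt_pos.mpr (hπ0 x))
  have key : P.mulVec (fun y => v y / Real.sqrt (π y)) x
      = (∑ y, Smat P π x y * v y) / Real.sqrt (π x) := by
    rw [mulVec_apply', Finset.sum_div]
    refine Finset.sum_congr rfl fun y _ => ?_
    have hyne : Real.sqrt (π y) ≠ 0 := ne_of_gt (Real.sqrt_pos.mpr (hπ0 y))
    simp only [Smat, Matrix.of_apply]
    field_simp
  rw [key, hvx]
  simp only [Pi.smul_apply, smul_eq_mul]
  rw [mul_div_assoc]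

lemma Smat_fixed (hP1 : ∀ x, ∑ y, P x y = 1) (hπ0 : ∀ x, 0 < π x) :
    Matrix.toEuclideanLin (Smat P π) (spv π) = spv π := by
  apply PiLp.ext
  intro x
  rw [tEL_apply, spv_apply]
  have : ∀ y, Smat P π x y * spv π y = Real.sqrt (π x) * P x y := by
    intro y
    have hyne : Real.sqrt (π y) ≠ 0 := ne_of_gt (Real.sqrt_pos.mpr (hπ0 y))
    simp only [Smat, Matrix.of_apply, spv_apply]
    field_simp
  rw [Finset.sum_congr rfl fun y _ => this y, ← Finset.mul_sum, hP1, mul_one]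

lemma quot_abs_le (hP0 : ∀ x y, 0 ≤ P x y) (hP1 : ∀ x, ∑ y, P x y = 1)
    (hπ0 : ∀ x, 0 < π x) (hrev : ∀ x y, π x * P x y = π y * P y x)
    (v : EuclideanSpace ℝ Ω) :
    |⟪Matrix.toEuclideanLin (Smat P π) v, v⟫| ≤ ‖v‖^2 := by
  rw [conv_inner hπ0, conv_norm hπ0]
  exact abs_le.mpr ⟨neg_energy_le hP0 hP1 hπ0 hrev _, energy_le hP0 hP1 hπ0 hrev _⟩


lemma rayleigh_lower (hP0 : ∀ x y, 0 ≤ P x y) (hP1 : ∀ x, ∑ y, P x y = 1)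
    (hπ0 : ∀ x, 0 < π x) (hrev : ∀ x y, π x * P x y = π y * P y x)
    {lamMin : ℝ}
    (hlamMin : IsLeast {r : ℝ | ∃ f : Ω → ℝ, f ≠ 0 ∧ P.mulVec f = r • f} lamMin)
    (f : Ω → ℝ) :
    lamMin * (∑ x, π x * f x * f x) ≤ ∑ x, π x * f x * P.mulVec f x := by
  set T := Matrix.toEuclideanLin (Smat P π) with hT
  have hsym : T.IsSymmetric := Matrix.isHermitian_iff_isSymmetric.mp (Smat_herm hπ0 hrev)
  have hev := hsym.hasEigenvalue_iInf_of_finiteDimensional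
  set μ : ℝ := ⨅ x : { x : EuclideanSpace ℝ Ω // x ≠ 0 },
      RCLike.re ⟪T x, x⟫ / ‖(x : EuclideanSpace ℝ Ω)‖ ^ 2 with hμ
  -- μ is an eigenvalue of P with some eigenfunction, so lamMin ≤ μ
  have hmin : lamMin ≤ μ := by
    obtain ⟨v, hv⟩ := hev.exists_hasEigenvector
    have hveq : T v = μ • v := Module.End.mem_eigenspace_iff.mp hv.1
    set g : Ω → ℝ := fun x => v x / Real.sqrt (π x) with hg
    have hgeig : P.mulVec g = μ • g := conv_eig hπ0 hveq
    have hgne : g ≠ 0 := by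
      intro h0
      apply hv.2
      apply PiLp.ext
      intro x
      have : g x = 0 := congrFun h0 x
      have hxne : Real.sqrt (π x) ≠ 0 := ne_of_gt (Real.sqrt_pos.mpr (hπ0 x))
      have := (div_eq_zero_iff.mp this).resolve_right hxne
      exact this
    exact hlamMin.2 ⟨g, hgne, hgeig⟩
  rcases eq_or_ne f 0 with rfl | hf0
  · simp
  · set v : EuclideanSpace ℝ Ω :=
      (WithLp.equiv 2 (Ω → ℝ)).symm (fun x => Real.sqrt (π x) * f x) with hv
    have hvx : ∀ x, v x = Real.sqrt (π x) * f x := fun x => rfl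
    have hgfx : ∀ x, v x / Real.sqrt (π x) = f x := by
      intro x
      have hxne : Real.sqrt (π x) ≠ 0 := ne_of_gt (Real.sqrt_pos.mpr (hπ0 x))
      rw [hvx x]
      exact mul_div_cancel_left₀ _ hxne
    have hgf : (fun x => v x / Real.sqrt (π x)) = f := funext hgfx
    have hv0 : v ≠ 0 := by
      intro h0
      apply hf0
      funext x
      have : v x = 0 := by simp [h0]
      rw [hvx x] at this
      have hxne : Real.sqrt (π x) ≠ 0 := ne_of_gt (Real.sqrt_pos.mpr (hπ0 x))
      exact (mul_eq_zero.mp this).resolve_left hxne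
    have hb : BddBelow (Set.range fun x : { x : EuclideanSpace ℝ Ω // x ≠ 0 } =>
        RCLike.re ⟪T x, x⟫ / ‖(x : EuclideanSpace ℝ Ω)‖ ^ 2) := by
      refine ⟨-1, ?_⟩
      rintro r ⟨x, rfl⟩
      have hnn : ‖(x : EuclideanSpace ℝ Ω)‖ ≠ 0 := norm_ne_zero_iff.mpr x.2
      have hn : (0:ℝ) < ‖(x : EuclideanSpace ℝ Ω)‖^2 := by positivity
      have habs := quot_abs_le hP0 hP1 hπ0 hrev (x : EuclideanSpace ℝ Ω)
      have h1 : -(‖(x : EuclideanSpace ℝ Ω)‖^2) ≤ ⟪T (x : EuclideanSpace ℝ Ω), (x : EuclideanSpace ℝ Ω)⟫ :=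
        neg_le_of_abs_le habs
      rw [le_div_iff₀ hn]
      simpa using h1
    have hle : μ ≤ ⟪T v, v⟫ / ‖v‖^2 := ciInf_le hb ⟨v, hv0⟩
    have hnn : ‖v‖ ≠ 0 := norm_ne_zero_iff.mpr hv0
    have hn : (0:ℝ) < ‖v‖^2 := by positivity
    have hconv1 : ⟪T v, v⟫ = ∑ x, π x * f x * P.mulVec f x := by
      rw [hT, conv_inner hπ0, hgf]
      exact Finset.sum_congr rfl fun x _ => by rw [hgfx x]
    have hconv2 : ‖v‖^2 = ∑ x, π x * f x * f x := by
      rw [conv_norm hπ0]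
      exact Finset.sum_congr rfl fun x _ => by rw [hgfx x]
    calc lamMin * (∑ x, π x * f x * f x) ≤ μ * (∑ x, π x * f x * f x) := by
          have := ip_nonneg hπ0 f
          nlinarith
      _ ≤ ∑ x, π x * f x * P.mulVec f x := by
          rw [← hconv1, ← hconv2]
          rw [le_div_iff₀ hn] at hle
          linarith

lemma rayleigh_upper (hP0 : ∀ x y, 0 ≤ P x y) (hP1 : ∀ x, ∑ y, P x y = 1)
    (hπ0 : ∀ x, 0 < π x) (hrev : ∀ x y, π x * P x y = π y * P y x)
    {lam2 : ℝ}
    (hlam2 : IsGreatest {r : ℝ | ∃ f : Ω → ℝ, f ≠ 0 ∧ (∑ v, π v * f v) = 0 ∧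
      P.mulVec f = r • f} lam2)
    (g : Ω → ℝ) (hg : ∑ x, π x * g x = 0) :
    ∑ x, π x * g x * P.mulVec g x ≤ lam2 * ∑ x, π x * g x * g x := by
  set T := Matrix.toEuclideanLin (Smat P π) with hT
  have hsym : T.IsSymmetric := Matrix.isHermitian_iff_isSymmetric.mp (Smat_herm hπ0 hrev)
  set W : Submodule ℝ (EuclideanSpace ℝ Ω) := (ℝ ∙ (spv π))ᗮ with hW
  have hmemW : ∀ v : EuclideanSpace ℝ Ω, v ∈ W ↔ ⟪spv π, v⟫ = 0 := fun v =>
    Submodule.mem_orthogonal_singleton_iff_inner_right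
  have hTsp : T (spv π) = spv π := Smat_fixed hP1 hπ0
  have hmaps : ∀ v ∈ W, T v ∈ W := by
    intro v hv
    rw [hmemW] at hv ⊢
    calc ⟪spv π, T v⟫ = ⟪T (spv π), v⟫ := (hsym (spv π) v).symm
      _ = 0 := by rw [hTsp]; exact hv
  set T' := T.restrict hmaps with hT'
  have key : ∀ a b : W, (inner ℝ (T' a) b : ℝ)
      = ⟪T (a : EuclideanSpace ℝ Ω), (b : EuclideanSpace ℝ Ω)⟫ := by
    intro a b
    rw [Submodule.coe_inner, LinearMap.restrict_coe_apply]
  have key2 : ∀ a b : W, (inner ℝ a b : ℝ)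
      = ⟪(a : EuclideanSpace ℝ Ω), (b : EuclideanSpace ℝ Ω)⟫ :=
    fun a b => Submodule.coe_inner W a b
  have hcoeT : ∀ a : W, ((T' a : W) : EuclideanSpace ℝ Ω) = T (a : EuclideanSpace ℝ Ω) :=
    fun a => LinearMap.restrict_coe_apply _ _ _
  have hsym' : T'.IsSymmetric := by
    intro x y
    rw [key x y, key2 x (T' y), hcoeT]
    exact hsym _ _
  -- W is nontrivial thanks to the eigenfunction witnessing lam2
  obtain ⟨f0, hf0ne, hf0mean, -⟩ := hlam2.1
  have hntW : Nontrivial W := by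
    set v0 : EuclideanSpace ℝ Ω :=
      (WithLp.equiv 2 (Ω → ℝ)).symm (fun x => Real.sqrt (π x) * f0 x) with hv0def
    have hv0x : ∀ x, v0 x = Real.sqrt (π x) * f0 x := fun x => rfl
    have hv0W : v0 ∈ W := by
      rw [hmemW, conv_mean hπ0]
      rw [← hf0mean]
      refine Finset.sum_congr rfl fun x _ => ?_
      have hxne : Real.sqrt (π x) ≠ 0 := ne_of_gt (Real.sqrt_pos.mpr (hπ0 x))
      rw [hv0x x, mul_div_cancel_left₀ _ hxne]
    have hv00 : v0 ≠ 0 := by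
      intro h0
      apply hf0ne
      funext x
      have : v0 x = 0 := by simp [h0]
      rw [hv0x x] at this
      have hxne : Real.sqrt (π x) ≠ 0 := ne_of_gt (Real.sqrt_pos.mpr (hπ0 x))
      exact (mul_eq_zero.mp this).resolve_left hxne
    refine nontrivial_of_ne ⟨v0, hv0W⟩ 0 ?_
    intro h0
    exact hv00 (by simpa [Subtype.ext_iff] using h0)
  have hev := hsym'.hasEigenvalue_iSup_of_finiteDimensional
  set μ : ℝ := ⨆ x : { x : W // x ≠ 0 },
      RCLike.re (inner ℝ (T' x) (x : W) : ℝ) / ‖(x : W)‖ ^ 2 with hμ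
  -- μ ≤ lam2
  have hmax : μ ≤ lam2 := by
    obtain ⟨v, hv⟩ := hev.exists_hasEigenvector
    have hveq : T' v = μ • v := Module.End.mem_eigenspace_iff.mp hv.1
    have hveqE : T ((v : W) : EuclideanSpace ℝ Ω) = μ • ((v : W) : EuclideanSpace ℝ Ω) := by
      have := congrArg (Subtype.val) hveq
      rw [LinearMap.restrict_coe_apply] at this
      exact this
    set g0 : Ω → ℝ := fun x => ((v : W) : EuclideanSpace ℝ Ω) x / Real.sqrt (π x) with hg0
    have hg0eig : P.mulVec g0 = μ • g0 := conv_eig hπ0 hveqE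
    have hg0mean : ∑ x, π x * g0 x = 0 := by
      rw [← conv_mean hπ0]
      exact (hmemW _).mp (v : W).2
    have hg0ne : g0 ≠ 0 := by
      intro h0
      apply hv.2
      have : ((v : W) : EuclideanSpace ℝ Ω) = 0 := by
        ext x
        have : g0 x = 0 := congrFun h0 x
        have hxne : Real.sqrt (π x) ≠ 0 := ne_of_gt (Real.sqrt_pos.mpr (hπ0 x))
        exact (div_eq_zero_iff.mp this).resolve_right hxne
      exact Subtype.ext this
    exact hlam2.2 ⟨g0, hg0ne, hg0mean, hg0eig⟩
  rcases eq_or_ne g 0 with rfl | hg0'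
  · simp
  · set v : EuclideanSpace ℝ Ω :=
      (WithLp.equiv 2 (Ω → ℝ)).symm (fun x => Real.sqrt (π x) * g x) with hvdef
    have hvx : ∀ x, v x = Real.sqrt (π x) * g x := fun x => rfl
    have hgfx : ∀ x, v x / Real.sqrt (π x) = g x := by
      intro x
      have hxne : Real.sqrt (π x) ≠ 0 := ne_of_gt (Real.sqrt_pos.mpr (hπ0 x))
      rw [hvx x]
      exact mul_div_cancel_left₀ _ hxne
    have hgf : (fun x => v x / Real.sqrt (π x)) = g := funext hgfx
    have hvW : v ∈ W := by
      rw [hmemW, conv_mean hπ0]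
      rw [← hg]
      exact Finset.sum_congr rfl fun x _ => by rw [hgfx x]
    have hv0 : v ≠ 0 := by
      intro h0
      apply hg0'
      funext x
      have : v x = 0 := by simp [h0]
      rw [hvx x] at this
      have hxne : Real.sqrt (π x) ≠ 0 := ne_of_gt (Real.sqrt_pos.mpr (hπ0 x))
      exact (mul_eq_zero.mp this).resolve_left hxne
    have hb : BddAbove (Set.range fun x : { x : W // x ≠ 0 } =>
        RCLike.re (inner ℝ (T' x) (x : W) : ℝ) / ‖(x : W)‖ ^ 2) := by
      refine ⟨1, ?_⟩
      rintro r ⟨x, rfl⟩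
      have hx0 : ((x : W) : EuclideanSpace ℝ Ω) ≠ 0 := by
        intro h
        exact x.2 (Subtype.ext h)
      have hnn : ‖((x : W) : EuclideanSpace ℝ Ω)‖ ≠ 0 := norm_ne_zero_iff.mpr hx0
      have hn : (0:ℝ) < ‖((x : W) : EuclideanSpace ℝ Ω)‖^2 := by positivity
      have habs := quot_abs_le hP0 hP1 hπ0 hrev ((x : W) : EuclideanSpace ℝ Ω)
      have h1 : ⟪T ((x : W) : EuclideanSpace ℝ Ω), ((x : W) : EuclideanSpace ℝ Ω)⟫
          ≤ ‖((x : W) : EuclideanSpace ℝ Ω)‖^2 := le_of_abs_le habs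
      have hq : (inner ℝ (T ((x : W) : EuclideanSpace ℝ Ω)) ((x : W) : EuclideanSpace ℝ Ω) : ℝ)
          / ‖((x : W) : EuclideanSpace ℝ Ω)‖ ^ 2 ≤ 1 := by
        rw [div_le_one hn]
        exact h1
      exact hq
    have hne : (⟨v, hvW⟩ : W) ≠ 0 := by
      rw [Ne, Submodule.mk_eq_zero]; exact hv0
    have hle : ⟪T v, v⟫ / ‖v‖^2 ≤ μ := le_ciSup hb (⟨⟨v, hvW⟩, hne⟩ : { x : W // x ≠ 0 })
    have hnn : ‖v‖ ≠ 0 := norm_ne_zero_iff.mpr hv0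
    have hn : (0:ℝ) < ‖v‖^2 := by positivity
    have hconv1 : ⟪T v, v⟫ = ∑ x, π x * g x * P.mulVec g x := by
      rw [hT, conv_inner hπ0, hgf]
      exact Finset.sum_congr rfl fun x _ => by rw [hgfx x]
    have hconv2 : ‖v‖^2 = ∑ x, π x * g x * g x := by
      rw [conv_norm hπ0]
      exact Finset.sum_congr rfl fun x _ => by rw [hgfx x]
    rw [div_le_iff₀ hn] at hle
    calc ∑ x, π x * g x * P.mulVec g x = ⟪T v, v⟫ := hconv1.symm
      _ ≤ μ * ‖v‖^2 := hle
      _ ≤ lam2 * ‖v‖^2 := by nlinarith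
      _ = lam2 * ∑ x, π x * g x * g x := by rw [hconv2]

lemma cs_ip (hπ0 : ∀ x, 0 < π x) (f g : Ω → ℝ) :
    (∑ x, π x * f x * g x)^2 ≤ (∑ x, π x * f x * f x) * (∑ x, π x * g x * g x) := by
  have h := Finset.sum_mul_sq_le_sq_mul_sq univ
    (fun x => Real.sqrt (π x) * f x) (fun x => Real.sqrt (π x) * g x)
  have e0 : ∑ x, (Real.sqrt (π x) * f x) * (Real.sqrt (π x) * g x) = ∑ x, π x * f x * g x :=
    Finset.sum_congr rfl fun x _ => by
      linear_combination (f x * g x) * Real.mul_self_sqrt (hπ0 x).le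
  have e1 : ∑ x, (Real.sqrt (π x) * f x)^2 = ∑ x, π x * f x * f x :=
    Finset.sum_congr rfl fun x _ => by
      linear_combination (f x * f x) * Real.mul_self_sqrt (hπ0 x).le
  have e2 : ∑ x, (Real.sqrt (π x) * g x)^2 = ∑ x, π x * g x * g x :=
    Finset.sum_congr rfl fun x _ => by
      linear_combination (g x * g x) * Real.mul_self_sqrt (hπ0 x).le
  rw [e0, e1, e2] at h
  exact h

lemma polar_bound (hπ0 : ∀ x, 0 < π x) (hrev : ∀ x y, π x * P x y = π y * P y x)
    (A : Finset Ω) {β : ℝ} (hβ0 : 0 ≤ β)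
    (hbound : ∀ f : Ω → ℝ, (∀ x ∈ A, f x = 0) →
      |∑ x, π x * f x * P.mulVec f x| ≤ β * ∑ x, π x * f x * f x)
    (f : Ω → ℝ) (hf : ∀ x ∈ A, f x = 0) :
    ∑ x, π x * (if x ∈ A then (0:ℝ) else P.mulVec f x) *
        (if x ∈ A then (0:ℝ) else P.mulVec f x)
      ≤ β^2 * ∑ x, π x * f x * f x := by
  set u : Ω → ℝ := fun x => if x ∈ A then 0 else P.mulVec f x with hu
  set N := ∑ x, π x * u x * u x with hN
  set M := ∑ x, π x * f x * f x with hM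
  have hM0 : 0 ≤ M := ip_nonneg hπ0 f
  have hN0 : 0 ≤ N := ip_nonneg hπ0 u
  have huA : ∀ x ∈ A, u x = 0 := fun x hx => by simp [hu, hx]
  have hNE : N = ∑ x, π x * u x * P.mulVec f x := by
    refine Finset.sum_congr rfl fun x _ => ?_
    by_cases hx : x ∈ A
    · simp [hu, hx]
    · simp [hu, hx]
  have hEfu : ∑ x, π x * f x * P.mulVec u x = N := by
    rw [E_symm hrev f u]
    exact hNE.symm
  have hmv : ∀ (a b : ℝ), P.mulVec (fun x => a * f x + b * u x)
      = fun x => a * P.mulVec f x + b * P.mulVec u x := by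
    intro a b; funext x
    rw [mulVec_apply']
    have hterm : ∀ y, P x y * (a * f y + b * u y)
        = a * (P x y * f y) + b * (P x y * u y) := fun y => by ring
    rw [Finset.sum_congr rfl fun y _ => hterm y, Finset.sum_add_distrib,
      ← Finset.mul_sum, ← Finset.mul_sum, mulVec_apply', mulVec_apply']
  have hQ : ∀ (a b : ℝ),
      ∑ x, π x * (a * f x + b * u x) * P.mulVec (fun x => a * f x + b * u x) x
      = a^2 * (∑ x, π x * f x * P.mulVec f x) + (a*b) * (∑ x, π x * f x * P.mulVec u x)
        + (a*b) * (∑ x, π x * u x * P.mulVec f x)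
        + b^2 * (∑ x, π x * u x * P.mulVec u x) := by
    intro a b
    have hterm : ∀ x, π x * (a * f x + b * u x) * P.mulVec (fun x => a * f x + b * u x) x
        = a^2 * (π x * f x * P.mulVec f x) + (a*b) * (π x * f x * P.mulVec u x)
          + (a*b) * (π x * u x * P.mulVec f x) + b^2 * (π x * u x * P.mulVec u x) := by
      intro x
      rw [hmv a b]
      ring
    rw [Finset.sum_congr rfl fun x _ => hterm x]
    simp only [Finset.sum_add_distrib, ← Finset.mul_sum]
  have hIP : ∀ (a b : ℝ), ∑ x, π x * (a * f x + b * u x) * (a * f x + b * u x)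
      = a^2 * M + 2*(a*b)*(∑ x, π x * f x * u x) + b^2 * N := by
    intro a b
    have hterm : ∀ x, π x * (a * f x + b * u x) * (a * f x + b * u x)
        = a^2 * (π x * f x * f x) + 2*(a*b) * (π x * f x * u x)
          + b^2 * (π x * u x * u x) := fun x => by ring
    rw [Finset.sum_congr rfl fun x _ => hterm x]
    simp only [Finset.sum_add_distrib, ← Finset.mul_sum]
    rfl
  have key : ∀ a b : ℝ, 4*(a*b)*N ≤ 2*β*(a^2*M + b^2*N) := by
    intro a b
    have hzp : ∀ x ∈ A, (fun x => a * f x + b * u x) x = 0 := fun x hx => by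
      simp [hf x hx, huA x hx]
    have hzm : ∀ x ∈ A, (fun x => a * f x + (-b) * u x) x = 0 := fun x hx => by
      simp [hf x hx, huA x hx]
    have h1 := hbound _ hzp
    have h2 := hbound _ hzm
    rw [hQ a b, hIP a b, hEfu, ← hNE] at h1
    rw [hQ a (-b), hIP a (-b), hEfu, ← hNE] at h2
    have h1' := abs_le.mp h1
    have h2' := abs_le.mp h2
    nlinarith [h1'.1, h1'.2, h2'.1, h2'.2]
  rcases hN0.lt_or_eq with hNpos | hNzero
  · have hMpos : 0 < M := by
      rcases hM0.lt_or_eq with h | h0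
      · exact h
      · exfalso
        have hf0 : ∀ x, f x = 0 := ip_zero hπ0 h0.symm
        have hfz : f = (0 : Ω → ℝ) := funext hf0
        have hu0 : ∀ x, u x = 0 := by
          intro x
          by_cases hx : x ∈ A
          · exact huA x hx
          · simp [hu, hx, hfz]
        have : N = 0 := by
          rw [hN]
          exact Finset.sum_eq_zero fun x _ => by rw [hu0 x]; ring
        linarith
    have hNM := key (Real.sqrt N) (Real.sqrt M)
    have hsN : Real.sqrt N ^ 2 = N := Real.sq_sqrt hN0
    have hsM : Real.sqrt M ^ 2 = M := Real.sq_sqrt hM0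
    rw [hsN, hsM] at hNM
    have hsNpos : 0 < Real.sqrt N := Real.sqrt_pos.mpr hNpos
    have hsMpos : 0 < Real.sqrt M := Real.sqrt_pos.mpr hMpos
    have step1 : Real.sqrt N * Real.sqrt M ≤ β * M := by nlinarith [hNM, hNpos]
    have step2 : N * M ≤ β^2 * M^2 := by
      nlinarith [step1, mul_pos hsNpos hsMpos, hsN, hsM]
    nlinarith [step2, hMpos]
  · rw [← hNzero]
    exact mul_nonneg (sq_nonneg β) hM0
end AuxST

/-- For a finite irreducible reversible Markov chain with
relaxation time `t_rel = (1 - max(λ₂, |λ_min|))⁻¹` and a nonempty set `A ⊆ Ω`,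
for all `t ≥ 0`: `P_π[T_A > t] ≤ (1 - π(A))·exp(-t·π(A)/t_rel)`. -/
theorem stmt6 {Ω : Type*} [Fintype Ω] [Nonempty Ω] [DecidableEq Ω]
    (P : Matrix Ω Ω ℝ) (π : Ω → ℝ)
    (hP0 : ∀ x y, 0 ≤ P x y) (hP1 : ∀ x, ∑ y, P x y = 1)
    (hπ0 : ∀ x, 0 < π x) (hπ1 : ∑ x, π x = 1)
    (hrev : ∀ x y, π x * P x y = π y * P y x)
    (hirr : ∀ x y, ∃ t : ℕ, 0 < (P ^ t) x y)
    (lam2 lamMin : ℝ)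
    (hlam2 : IsGreatest {r : ℝ | ∃ f : Ω → ℝ, f ≠ 0 ∧ (∑ v, π v * f v) = 0 ∧
      P.mulVec f = r • f} lam2)
    (hlamMin : IsLeast {r : ℝ | ∃ f : Ω → ℝ, f ≠ 0 ∧ P.mulVec f = r • f} lamMin)
    (A : Finset Ω) (hA : A.Nonempty) (t : ℕ) :
    ∑ x, π x * survSet P A t x ≤
      (1 - ∑ a ∈ A, π a) *
        Real.exp (-(t : ℝ) * (∑ a ∈ A, π a) / (1 - max lam2 |lamMin|)⁻¹) := by
  classical
  set πA := ∑ a ∈ A, π a with hπA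
  set lam := max lam2 |lamMin| with hlamdef
  set β := 1 - (1 - lam) * πA with hβ
  have hπApos : 0 < πA := Finset.sum_pos (fun i _ => hπ0 i) hA
  have hπA1 : πA ≤ 1 := by
    rw [hπA, ← hπ1]
    exact Finset.sum_le_sum_of_subset_of_nonneg (Finset.subset_univ A)
      (fun i _ _ => (hπ0 i).le)
  have hlam2_le : lam2 ≤ 1 := by
    obtain ⟨f0, h1, h2, h3⟩ := hlam2.1
    exact (abs_le.mp (eig_abs_le_one hP0 hP1 h1 h3)).2
  have hlmin_le : |lamMin| ≤ 1 := by
    obtain ⟨f0, h1, h3⟩ := hlamMin.1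
    exact eig_abs_le_one hP0 hP1 h1 h3
  have hlam0 : 0 ≤ lam := le_trans (abs_nonneg lamMin) (le_max_right _ _)
  have hlam1 : lam ≤ 1 := max_le hlam2_le hlmin_le
  have hβ0 : 0 ≤ β := by rw [hβ]; nlinarith
  have hlamβ : lam ≤ β := by rw [hβ]; nlinarith
  set ind : Ω → ℝ := fun x => if x ∈ A then 0 else 1 with hind
  have hindA : ∑ x, π x * ind x * ind x = 1 - πA := by
    have hterm : ∀ x, π x * ind x * ind x = π x - (if x ∈ A then π x else 0) := by
      intro x; by_cases hx : x ∈ A <;> simp [hind, hx]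
    rw [Finset.sum_congr rfl fun x _ => hterm x, Finset.sum_sub_distrib, hπ1]
    congr 1
    rw [Finset.sum_ite_mem, Finset.univ_inter]
  -- the key contraction bound on functions vanishing on A
  have K1 : ∀ f : Ω → ℝ, (∀ x ∈ A, f x = 0) →
      |∑ x, π x * f x * P.mulVec f x| ≤ β * ∑ x, π x * f x * f x := by
    intro f hfA
    set M := ∑ x, π x * f x * f x with hM
    have hM0 : 0 ≤ M := ip_nonneg hπ0 f
    set c := ∑ x, π x * f x with hc
    set g : Ω → ℝ := fun x => f x - c with hgdef
    have hgmean : ∑ x, π x * g x = 0 := by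
      have hterm : ∀ x, π x * g x = π x * f x - π x * c := fun x => by
        simp only [hgdef]; ring
      rw [Finset.sum_congr rfl fun x _ => hterm x, Finset.sum_sub_distrib,
        ← Finset.sum_mul, hπ1, one_mul, ← hc, sub_self]
    have hup := rayleigh_upper hP0 hP1 hπ0 hrev hlam2 g hgmean
    have hPg : P.mulVec g = fun x => P.mulVec f x - c := by
      funext x
      rw [mulVec_apply']
      have hterm : ∀ y, P x y * (f y - c) = P x y * f y - P x y * c := fun y => by ring
      rw [show (∑ y, P x y * g y) = ∑ y, (P x y * f y - P x y * c) from
          Finset.sum_congr rfl fun y _ => hterm y,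
        Finset.sum_sub_distrib, ← Finset.sum_mul, hP1, one_mul, ← mulVec_apply']
    have hPfc : ∑ x, π x * P.mulVec f x = c := by
      have h1 : ∑ x, π x * P.mulVec f x = ∑ x, ∑ y, π x * P x y * f y := by
        refine Finset.sum_congr rfl fun x _ => ?_
        rw [mulVec_apply', Finset.mul_sum]
        exact Finset.sum_congr rfl fun y _ => by ring
      rw [h1, Finset.sum_comm, hc]
      refine Finset.sum_congr rfl fun y _ => ?_
      calc ∑ x, π x * P x y * f y = (∑ x, π x * P x y) * f y := by rw [Finset.sum_mul]
        _ = π y * f y := by rw [stationary hP1 hrev]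
    have hEg : ∑ x, π x * g x * P.mulVec g x
        = (∑ x, π x * f x * P.mulVec f x) - c^2 := by
      rw [hPg]
      have hterm : ∀ x, π x * g x * (P.mulVec f x - c)
          = π x * f x * P.mulVec f x - c * (π x * f x)
            - c * (π x * P.mulVec f x) + (c*c) * π x := by
        intro x; simp only [hgdef]; ring
      rw [Finset.sum_congr rfl fun x _ => hterm x]
      simp only [Finset.sum_add_distrib, Finset.sum_sub_distrib, ← Finset.mul_sum]
      rw [← hc, hPfc, hπ1]
      ring
    have hipg : ∑ x, π x * g x * g x = M - c^2 := by
      have hterm : ∀ x, π x * g x * g x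
          = π x * f x * f x - (2*c) * (π x * f x) + (c*c) * π x := by
        intro x; simp only [hgdef]; ring
      rw [Finset.sum_congr rfl fun x _ => hterm x]
      simp only [Finset.sum_add_distrib, Finset.sum_sub_distrib, ← Finset.mul_sum]
      rw [← hc, hπ1, ← hM]
      ring
    have hcind : c = ∑ x, π x * ind x * f x := by
      rw [hc]
      refine Finset.sum_congr rfl fun x _ => ?_
      by_cases hx : x ∈ A
      · simp [hind, hx, hfA x hx]
      · simp [hind, hx]
    have hc2 : c^2 ≤ (1 - πA) * M := by
      have hcs := cs_ip hπ0 ind f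
      rw [← hcind, hindA, ← hM] at hcs
      exact hcs
    have hlam2lam : lam2 ≤ lam := le_max_left _ _
    have hQup : ∑ x, π x * f x * P.mulVec f x ≤ β * M := by
      have h2 : ∑ x, π x * f x * P.mulVec f x
          = (∑ x, π x * g x * P.mulVec g x) + c^2 := by rw [hEg]; ring
      rw [h2, hβ]
      have h3 : ∑ x, π x * g x * P.mulVec g x ≤ lam2 * (M - c^2) := by
        rw [← hipg]; exact hup
      have hint1 : (1 - lam2)*c^2 ≤ (1 - lam2)*((1-πA)*M) :=
        mul_le_mul_of_nonneg_left hc2 (by linarith)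
      have hint2 : 0 ≤ (lam - lam2)*(πA*M) :=
        mul_nonneg (by linarith) (mul_nonneg hπApos.le hM0)
      nlinarith [h3]
    have hQlo : -(β*M) ≤ ∑ x, π x * f x * P.mulVec f x := by
      have h4 := rayleigh_lower hP0 hP1 hπ0 hrev hlamMin f
      have h5 : -lam ≤ lamMin := by
        have h6 : |lamMin| ≤ lam := le_max_right _ _
        have h7 := neg_abs_le lamMin
        linarith
      have hint : 0 ≤ (lamMin + β)*M := mul_nonneg (by linarith) hM0
      rw [← hM] at h4
      nlinarith [h4, hint]
    exact abs_le.mpr ⟨hQlo, hQup⟩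
  -- basic survSet facts
  have hsurvA : ∀ s x, x ∈ A → survSet P A s x = 0 := by
    intro s x hx
    cases s <;> simp [survSet, hx]
  have hsurv_nonneg : ∀ s x, 0 ≤ survSet P A s x := by
    intro s
    induction s with
    | zero =>
      intro x
      by_cases hx : x ∈ A <;> simp [survSet, hx]
    | succ s ih =>
      intro x
      by_cases hx : x ∈ A
      · simp [survSet, hx]
      · simp only [survSet, hx, if_false]
        exact Finset.sum_nonneg fun y _ => mul_nonneg (hP0 x y) (ih y)
  have hsucc : ∀ s x, survSet P A (s+1) x
      = if x ∈ A then (0:ℝ) else P.mulVec (survSet P A s) x := by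
    intro s x
    simp [survSet, mulVec_apply']
  -- induction: squared norm decays geometrically
  have K3 : ∀ s, ∑ x, π x * survSet P A s x * survSet P A s x ≤ (β^2)^s * (1 - πA) := by
    intro s
    induction s with
    | zero =>
      have h0 : ∑ x, π x * survSet P A 0 x * survSet P A 0 x = 1 - πA := by
        rw [← hindA]
        exact Finset.sum_congr rfl fun x _ => by
          by_cases hx : x ∈ A <;> simp [survSet, hind, hx]
      rw [h0]
      simp
    | succ s ih =>
      have hpol := polar_bound hπ0 hrev A hβ0 K1 (survSet P A s)
        (fun x hx => hsurvA s x hx)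
      have heq : ∑ x, π x * survSet P A (s+1) x * survSet P A (s+1) x
          = ∑ x, π x * (if x ∈ A then (0:ℝ) else P.mulVec (survSet P A s) x) *
              (if x ∈ A then (0:ℝ) else P.mulVec (survSet P A s) x) := by
        refine Finset.sum_congr rfl fun x _ => ?_
        rw [hsucc s x]
      rw [heq]
      calc ∑ x, π x * (if x ∈ A then (0:ℝ) else P.mulVec (survSet P A s) x) *
              (if x ∈ A then (0:ℝ) else P.mulVec (survSet P A s) x)
          ≤ β^2 * ∑ x, π x * survSet P A s x * survSet P A s x := hpol
        _ ≤ β^2 * ((β^2)^s * (1-πA)) := mul_le_mul_of_nonneg_left ih (sq_nonneg β)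
        _ = (β^2)^(s+1) * (1-πA) := by rw [pow_succ]; ring
  -- Cauchy–Schwarz to bound the mean
  have hπAc0 : (0:ℝ) ≤ 1 - πA := by linarith
  have hZind : ∑ x, π x * survSet P A t x = ∑ x, π x * ind x * survSet P A t x := by
    refine Finset.sum_congr rfl fun x _ => ?_
    by_cases hx : x ∈ A
    · simp [hind, hx, hsurvA t x hx]
    · simp [hind, hx]
  have hZ0 : 0 ≤ ∑ x, π x * survSet P A t x :=
    Finset.sum_nonneg fun x _ => mul_nonneg (hπ0 x).le (hsurv_nonneg t x)
  have hZsq : (∑ x, π x * survSet P A t x)^2 ≤ ((1-πA) * β^t)^2 := by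
    rw [hZind]
    calc (∑ x, π x * ind x * survSet P A t x)^2
        ≤ (∑ x, π x * ind x * ind x) *
            ∑ x, π x * survSet P A t x * survSet P A t x := cs_ip hπ0 ind _
      _ ≤ (1-πA) * ((β^2)^t * (1-πA)) := by
          rw [hindA]
          exact mul_le_mul_of_nonneg_left (K3 t) hπAc0
      _ = ((1-πA) * β^t)^2 := by rw [← pow_mul, mul_comm 2 t, pow_mul]; ring
  have hZle : ∑ x, π x * survSet P A t x ≤ (1-πA) * β^t := by
    have h1 := Real.sqrt_le_sqrt hZsq
    rwa [Real.sqrt_sq hZ0, Real.sqrt_sq (mul_nonneg hπAc0 (pow_nonneg hβ0 t))] at h1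
  have hβexp : β ≤ Real.exp (-(1-lam)*πA) := by
    have h := Real.add_one_le_exp (-(1-lam)*πA)
    rw [hβ]
    linarith
  calc ∑ x, π x * survSet P A t x ≤ (1-πA) * β^t := hZle
    _ ≤ (1-πA) * Real.exp (-(1-lam)*πA)^t :=
        mul_le_mul_of_nonneg_left (pow_le_pow_left₀ hβ0 hβexp t) hπAc0
    _ = (1-πA) * Real.exp (-(t:ℝ) * πA / (1 - lam)⁻¹) := by
        rw [← Real.exp_nat_mul, div_eq_mul_inv, inv_inv]
        congr 1
        ring
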